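/- arXiv:1501.01123 — 2 statements merged into one kernel-verified Lean document; each statement's English description precedes it below -/
import Mathlib

section
/- For every smooth 1-form θ on M, every smooth vector field W, and all smooth vector fields X,Y,Z, dΨ_{θ,W}(X,Y,Z) = Σ_cyc (∇_X θ)(R(Y,Z)W) + Σ_cyc θ(R(Y,Z)(∇_X W)), where each Σ_cyc denotes the sum over the cyclic permutations (X,Y,Z), (Y,Z,X), (Z,X,Y). -/
open scoped Manifold

local notation "∞" => (⊤ : ℕ∞)

noncomputable section

variable {E : Type*} [NormedAddCommGroup E] [NormedSpace ℝ E]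
  {H : Type*} [TopologicalSpace H]

/-- A linear connection on the smooth manifold `M`, given as an operator on global smooth
vector fields (realised as derivations of the algebra `C^∞(M)` of smooth real-valued
functions) which is ℝ-bilinear, `C^∞(M)`-linear in its first argument and satisfies the
Leibniz rule `∇_X (f • Y) = X f • Y + f • ∇_X Y` in its second argument. -/
structure LinearConnection (I : ModelWithCorners ℝ E H) (M : Type*) [TopologicalSpace M]
    [ChartedSpace H M] [IsManifold I (⊤ : ℕ∞) M] where
  cov : Derivation ℝ C^∞⟮I, M; ℝ⟯ C^∞⟮I, M; ℝ⟯ →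
        Derivation ℝ C^∞⟮I, M; ℝ⟯ C^∞⟮I, M; ℝ⟯ →
        Derivation ℝ C^∞⟮I, M; ℝ⟯ C^∞⟮I, M; ℝ⟯
  add_left : ∀ X X' Y, cov (X + X') Y = cov X Y + cov X' Y
  smul_real_left : ∀ (r : ℝ) (X Y), cov (r • X) Y = r • cov X Y
  smul_smooth_left : ∀ (f : C^∞⟮I, M; ℝ⟯) (X Y), cov (f • X) Y = f • cov X Y
  add_right : ∀ X Y Y', cov X (Y + Y') = cov X Y + cov X Y'
  smul_real_right : ∀ (r : ℝ) (X Y), cov X (r • Y) = r • cov X Y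
  leibniz : ∀ (f : C^∞⟮I, M; ℝ⟯) (X Y), cov X (f • Y) = X f • Y + f • cov X Y

variable {I : ModelWithCorners ℝ E H}
  {M : Type*} [TopologicalSpace M] [ChartedSpace H M] [IsManifold I (⊤ : ℕ∞) M]

/-- Smooth real-valued functions on `M`. -/
local notation "Cinf" => C^∞⟮I, M; ℝ⟯
/-- Smooth global vector fields on `M`, as derivations of `C^∞(M)`. -/
local notation "VF" => Derivation ℝ C^∞⟮I, M; ℝ⟯ C^∞⟮I, M; ℝ⟯

namespace LinearConnection

variable (nab : LinearConnection I M)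

/-- The torsion `T(X,Y) := ∇_X Y − ∇_Y X − [X,Y]` of a linear connection. -/
def torsion (X Y : VF) : VF := nab.cov X Y - nab.cov Y X - ⁅X, Y⁆

/-- The curvature `R(X,Y)Z := ∇_X ∇_Y Z − ∇_Y ∇_X Z − ∇_{[X,Y]} Z` of a linear connection. -/
def curv (X Y Z : VF) : VF :=
  nab.cov X (nab.cov Y Z) - nab.cov Y (nab.cov X Z) - nab.cov ⁅X, Y⁆ Z

/-- The covariant derivative along `X` of a scalar-valued map of one vector field
argument (e.g. a 1-form): `(∇_X θ)(Y) := X(θ(Y)) − θ(∇_X Y)`. -/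
def covOne (X : VF) (θ : VF → Cinf) : VF → Cinf :=
  fun Y => X (θ Y) - θ (nab.cov X Y)

/-- The covariant derivative `(∇_X T)(Y,Z) := ∇_X(T(Y,Z)) − T(∇_X Y, Z) − T(Y, ∇_X Z)`
of the torsion. -/
def covTorsion (X Y Z : VF) : VF :=
  nab.cov X (nab.torsion Y Z) - nab.torsion (nab.cov X Y) Z - nab.torsion Y (nab.cov X Z)

/-- The covariant derivative
`(∇_X R)(Y,Z)W := ∇_X(R(Y,Z)W) − R(∇_X Y,Z)W − R(Y,∇_X Z)W − R(Y,Z)(∇_X W)`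
of the curvature. -/
def covCurv (X Y Z W : VF) : VF :=
  nab.cov X (nab.curv Y Z W) - nab.curv (nab.cov X Y) Z W - nab.curv Y (nab.cov X Z) W
    - nab.curv Y Z (nab.cov X W)

end LinearConnection

/-- The exterior derivative of a 1-form (given as a bare function on vector fields):
`dα(X,Y) := X(α(Y)) − Y(α(X)) − α([X,Y])`. -/
def extD1 (α : VF → Cinf) (X Y : VF) : Cinf :=
  X (α Y) - Y (α X) - α ⁅X, Y⁆

/-- The exterior derivative of a 2-form (given as a bare function on vector fields):
`dβ(X,Y,Z) := X(β(Y,Z)) + Y(β(Z,X)) + Z(β(X,Y)) − β([X,Y],Z) − β([Y,Z],X) − β([Z,X],Y)`. -/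
def extD2 (β : VF → VF → Cinf) (X Y Z : VF) : Cinf :=
  X (β Y Z) + Y (β Z X) + Z (β X Y) - β ⁅X, Y⁆ Z - β ⁅Y, Z⁆ X - β ⁅Z, X⁆ Y


lemma LinearConnection.cov_sub_right' (nab : LinearConnection I M)
    (X Y Y' : Derivation ℝ C^∞⟮I, M; ℝ⟯ C^∞⟮I, M; ℝ⟯) :
    nab.cov X (Y - Y') = nab.cov X Y - nab.cov X Y' := by
  have h : Y - Y' = Y + (-1 : ℝ) • Y' := by module
  rw [h, nab.add_right, nab.smul_real_right]
  module

/-- `dΨ_{θ,W}(X,Y,Z) = Σ_cyc (∇_X θ)(R(Y,Z)W) + Σ_cyc θ(R(Y,Z)(∇_X W))`, where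
`Ψ_{θ,W}(X,Y) := (∇_Y θ)(∇_X W) − (∇_X θ)(∇_Y W)`. -/
theorem extD_Psi_expansion (nab : LinearConnection I M)
    (θ : VF →ₗ[Cinf] Cinf) (W X Y Z : VF) :
    extD2 (fun A B => nab.covOne B (⇑θ) (nab.cov A W) - nab.covOne A (⇑θ) (nab.cov B W))
        X Y Z =
      (nab.covOne X (⇑θ) (nab.curv Y Z W) + nab.covOne Y (⇑θ) (nab.curv Z X W)
          + nab.covOne Z (⇑θ) (nab.curv X Y W))
        + (θ (nab.curv Y Z (nab.cov X W)) + θ (nab.curv Z X (nab.cov Y W))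
          + θ (nab.curv X Y (nab.cov Z W))) := by
  simp only [extD2, LinearConnection.covOne, LinearConnection.curv,
    nab.cov_sub_right', map_sub, Derivation.commutator_apply]
  abel
end
end

section
/- Cartan's first Bianchi identity: for each index a and all smooth vector fields X,Y,Z, dΘ^a(X,Y,Z) + Σ_b (ω^a_b ∧ Θ^b)(X,Y,Z) = Σ_b (Ω^a_b ∧ θ^b)(X,Y,Z). -/
open scoped Manifold

local notation "∞" => (⊤ : ℕ∞)

noncomputable section

variable {E : Type*} [NormedAddCommGroup E] [NormedSpace ℝ E]
  {H : Type*} [TopologicalSpace H]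

variable {I : ModelWithCorners ℝ E H}
  {M : Type*} [TopologicalSpace M] [ChartedSpace H M] [IsManifold I (⊤ : ℕ∞) M]

/-- Smooth real-valued functions on `M`. -/
local notation "Cinf" => C^∞⟮I, M; ℝ⟯
/-- Smooth global vector fields on `M`, as derivations of `C^∞(M)`. -/
local notation "VF" => Derivation ℝ C^∞⟮I, M; ℝ⟯ C^∞⟮I, M; ℝ⟯

section AuxLemmas

variable (nab : LinearConnection I M)

lemma cov_zero_right (X : VF) : nab.cov X 0 = 0 := by
  have h := nab.smul_real_right 0 X 0
  simpa using h

lemma cov_sub_right (X Y Y' : VF) :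
    nab.cov X (Y - Y') = nab.cov X Y - nab.cov X Y' := by
  have h := nab.add_right X (Y - Y') Y'
  have h2 : (Y - Y') + Y' = Y := by abel
  rw [h2] at h
  exact eq_sub_of_add_eq h.symm

lemma cov_sum_right {ι : Type*} (s : Finset ι) (X : VF) (f : ι → VF) :
    nab.cov X (∑ i ∈ s, f i) = ∑ i ∈ s, nab.cov X (f i) := by
  classical
  induction s using Finset.induction_on with
  | empty => simpa using cov_zero_right nab X
  | insert _ _ h ih =>
    rw [Finset.sum_insert h, Finset.sum_insert h, nab.add_right, ih]

lemma curv_add_right (X Y Z Z' : VF) :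
    nab.curv X Y (Z + Z') = nab.curv X Y Z + nab.curv X Y Z' := by
  simp only [LinearConnection.curv, nab.add_right]
  abel

lemma curv_zero_right (X Y : VF) : nab.curv X Y 0 = 0 := by
  simp [LinearConnection.curv, cov_zero_right]

lemma curv_sum_right {ι : Type*} (s : Finset ι) (X Y : VF) (f : ι → VF) :
    nab.curv X Y (∑ i ∈ s, f i) = ∑ i ∈ s, nab.curv X Y (f i) := by
  classical
  induction s using Finset.induction_on with
  | empty => simpa using curv_zero_right nab X Y
  | insert _ _ h ih =>
    rw [Finset.sum_insert h, Finset.sum_insert h, curv_add_right, ih]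

lemma curv_smul_right (f : Cinf) (X Y Z : VF) :
    nab.curv X Y (f • Z) = f • nab.curv X Y Z := by
  simp only [LinearConnection.curv, nab.leibniz, nab.add_right,
    Derivation.commutator_apply, sub_smul, smul_sub]
  module

end AuxLemmas

set_option maxHeartbeats 1000000 in
/-- **Cartan's first Bianchi identity.** For a frame `U_1,…,U_n` with dual coframe
`θ^1,…,θ^n`: `dΘ^a + Σ_b ω^a_b ∧ Θ^b = Σ_b Ω^a_b ∧ θ^b`, where
`ω^a_b(X) := θ^a(∇_X U_b)`, `Θ^a(X,Y) := θ^a(T(X,Y))`, `Ω^a_b(X,Y) := θ^a(R(X,Y)U_b)`,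
`(α ∧ β)(X,Y,Z) := α(X)β(Y,Z) + α(Y)β(Z,X) + α(Z)β(X,Y)` for a 1-form `α` and 2-form `β`,
and `(β ∧ α)(X,Y,Z) := β(X,Y)α(Z) + β(Y,Z)α(X) + β(Z,X)α(Y)`. -/
theorem cartan_first_bianchi (nab : LinearConnection I M) {n : ℕ}
    (U : Fin n → VF) (θf : Fin n → (VF →ₗ[Cinf] Cinf))
    (hdual : ∀ a b, θf a (U b) = if a = b then 1 else 0)
    (hframe : ∀ X : VF, X = ∑ a, θf a X • U a)
    (a : Fin n) (X Y Z : VF) :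
    extD2 (fun A B => θf a (nab.torsion A B)) X Y Z
      + ∑ b, (θf a (nab.cov X (U b)) * θf b (nab.torsion Y Z)
          + θf a (nab.cov Y (U b)) * θf b (nab.torsion Z X)
          + θf a (nab.cov Z (U b)) * θf b (nab.torsion X Y)) =
    ∑ b, (θf a (nab.curv X Y (U b)) * θf b Z
        + θf a (nab.curv Y Z (U b)) * θf b X
        + θf a (nab.curv Z X (U b)) * θf b Y) := by
    classical
  -- key lemma: the connection-form sums
  have key : ∀ (V W : VF),
      ∑ b, θf a (nab.cov V (U b)) * θf b W
        = θf a (nab.cov V W) - V (θf a W) := by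
    intro V W
    have h1 : nab.cov V W = ∑ b, (V (θf b W) • U b + θf b W • nab.cov V (U b)) := by
      conv_lhs => rw [hframe W]
      rw [cov_sum_right]
      exact Finset.sum_congr rfl fun b _ => nab.leibniz _ _ _
    have h2 : θf a (nab.cov V W)
        = V (θf a W) + ∑ b, θf a (nab.cov V (U b)) * θf b W := by
      rw [h1, map_sum]
      have : ∀ b : Fin n, θf a (V (θf b W) • U b + θf b W • nab.cov V (U b))
          = (if a = b then V (θf b W) else 0) + θf a (nab.cov V (U b)) * θf b W := by
        intro b
        rw [map_add, map_smul, map_smul, hdual, smul_eq_mul, smul_eq_mul]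
        by_cases h : a = b <;> simp [h, mul_comm]
      rw [Finset.sum_congr rfl fun b _ => this b, Finset.sum_add_distrib,
        Finset.sum_ite_eq]
      simp
    rw [h2]; ring
  -- curvature sums
  have hcurv : ∀ (V V' W : VF),
      ∑ b, θf a (nab.curv V V' (U b)) * θf b W = θf a (nab.curv V V' W) := by
    intro V V' W
    conv_rhs => rw [hframe W]
    rw [curv_sum_right, map_sum]
    refine Finset.sum_congr rfl fun b _ => ?_
    rw [curv_smul_right, map_smul, smul_eq_mul, mul_comm]
  -- the main derivation-level identity
  have jac : ∀ (A B C : VF), ⁅⁅A, B⁆, C⁆ = -⁅C, ⁅A, B⁆⁆ := by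
    intro A B C; rw [← lie_skew]
  have main : nab.cov X (nab.torsion Y Z) + nab.cov Y (nab.torsion Z X)
        + nab.cov Z (nab.torsion X Y)
        - nab.torsion ⁅X, Y⁆ Z - nab.torsion ⁅Y, Z⁆ X - nab.torsion ⁅Z, X⁆ Y
      = nab.curv X Y Z + nab.curv Y Z X + nab.curv Z X Y := by
    have expand : nab.cov X (nab.torsion Y Z) + nab.cov Y (nab.torsion Z X)
          + nab.cov Z (nab.torsion X Y)
          - nab.torsion ⁅X, Y⁆ Z - nab.torsion ⁅Y, Z⁆ X - nab.torsion ⁅Z, X⁆ Y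
        = nab.curv X Y Z + nab.curv Y Z X + nab.curv Z X Y
          - (⁅X, ⁅Y, Z⁆⁆ + ⁅Y, ⁅Z, X⁆⁆ + ⁅Z, ⁅X, Y⁆⁆) := by
      simp only [LinearConnection.torsion, LinearConnection.curv, cov_sub_right, jac]
      abel
    rw [expand, lie_jacobi, sub_zero]
  have hmain := congrArg (θf a) main
  simp only [map_add, map_sub] at hmain
  have s1 := key X (nab.torsion Y Z)
  have s2 := key Y (nab.torsion Z X)
  have s3 := key Z (nab.torsion X Y)
  have c1 := hcurv X Y Z
  have c2 := hcurv Y Z X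
  have c3 := hcurv Z X Y
  simp only [extD2]
  rw [Finset.sum_add_distrib, Finset.sum_add_distrib, Finset.sum_add_distrib,
    Finset.sum_add_distrib]
  rw [s1, s2, s3, c1, c2, c3]
  linear_combination hmain
end
end
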